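/- Let β > 0, let V be a finite index set, and for each i ∈ V let x_i, z_i ∈ [0,1]. Then ∑_{i∈V} (σ_β(x_i − z_i) − σ_β(−z_i)) ≥ ((∑_{i∈V} x_i − ∑_{i∈V} z_i)/2) · (1 − exp(−β))/(1 + exp(−β)). -/

import Mathlib

noncomputable def sigma (β t : ℝ) : ℝ := 1 / (1 + Real.exp (-(β * t)))

namespace LinAux

noncomputable def sig' (β t : ℝ) : ℝ :=
  β * Real.exp (-(β * t)) / (1 + Real.exp (-(β * t)))^2

noncomputable def sig'' (β t : ℝ) : ℝ :=
  β^2 * Real.exp (-(β * t)) * (Real.exp (-(β * t)) - 1) / (1 + Real.exp (-(β * t)))^3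

lemma one_add_exp_pos (y : ℝ) : 0 < 1 + Real.exp y := by positivity

lemma hasDerivAt_E (β t : ℝ) :
    HasDerivAt (fun t => Real.exp (-(β * t))) (-β * Real.exp (-(β * t))) t := by
  have h : HasDerivAt (fun t : ℝ => -(β * t)) (-β) t := by
    simpa using ((hasDerivAt_id t).const_mul β).fun_neg
  simpa [mul_comm] using h.exp

lemma hasDerivAt_sigma (β t : ℝ) : HasDerivAt (sigma β) (sig' β t) t := by
  have hne : (1 + Real.exp (-(β * t))) ≠ 0 := (one_add_exp_pos _).ne'
  have h : HasDerivAt (fun t => 1 + Real.exp (-(β * t))) (-β * Real.exp (-(β * t))) t :=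
    (hasDerivAt_E β t).const_add 1
  have := h.inv hne
  have heq : -(-β * Real.exp (-(β * t))) / (1 + Real.exp (-(β * t)))^2 = sig' β t := by
    unfold sig'; ring
  rw [heq] at this
  have hs : sigma β = fun y => (1 + Real.exp (-(β * y)))⁻¹ := by
    funext y; rw [sigma, one_div]
  rw [hs]
  exact this

lemma hasDerivAt_sig' (β t : ℝ) : HasDerivAt (sig' β) (sig'' β t) t := by
  have hne : (1 + Real.exp (-(β * t))) ≠ 0 := (one_add_exp_pos _).ne'
  have hne2 : ((1 + Real.exp (-(β * t)))^2) ≠ 0 := pow_ne_zero _ hne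
  have hE := hasDerivAt_E β t
  have h1 : HasDerivAt (fun t => 1 + Real.exp (-(β * t))) (-β * Real.exp (-(β * t))) t :=
    hE.const_add 1
  have hsq : HasDerivAt (fun t => (1 + Real.exp (-(β * t)))^2)
      (2 * (1 + Real.exp (-(β * t)))^1 * (-β * Real.exp (-(β * t)))) t := by
    simpa using h1.fun_pow 2
  have hinv := hsq.fun_inv hne2
  have hnum : HasDerivAt (fun t => β * Real.exp (-(β * t)))
      (β * (-β * Real.exp (-(β * t)))) t := hE.const_mul β
  have := hnum.fun_mul hinv
  have heq : (fun t => β * Real.exp (-(β * t)) * ((1 + Real.exp (-(β * t)))^2)⁻¹) = sig' β := by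
    funext s; unfold sig'; rw [div_eq_mul_inv]
  rw [heq] at this
  refine this.congr_deriv ?_
  unfold sig''
  field_simp
  ring

lemma concave_sigma {β : ℝ} (hβ : 0 < β) :
    ConcaveOn ℝ (Set.Icc (0:ℝ) 1) (sigma β) := by
  apply concaveOn_of_hasDerivWithinAt2_nonpos (f' := sig' β) (f'' := sig'' β)
    (convex_Icc 0 1)
  · exact fun t _ => (hasDerivAt_sigma β t).continuousAt.continuousWithinAt
  · exact fun t _ => (hasDerivAt_sigma β t).hasDerivWithinAt
  · exact fun t _ => (hasDerivAt_sig' β t).hasDerivWithinAt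
  · intro t ht
    rw [interior_Icc] at ht
    unfold sig''
    have hE1 : Real.exp (-(β * t)) ≤ 1 := by
      rw [Real.exp_le_one_iff]
      nlinarith [ht.1]
    have h3 : (0:ℝ) < (1 + Real.exp (-(β * t)))^3 := by positivity
    apply div_nonpos_of_nonpos_of_nonneg _ h3.le
    apply mul_nonpos_of_nonneg_of_nonpos
    · positivity
    · linarith

lemma sigma_zero (β : ℝ) : sigma β 0 = 1/2 := by norm_num [sigma]

lemma sigma_one (β : ℝ) : sigma β 1 = 1 / (1 + Real.exp (-β)) := by simp [sigma]

lemma sigma_mono {β : ℝ} (hβ : 0 < β) {a b : ℝ} (hab : a ≤ b) : sigma β a ≤ sigma β b := by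
  unfold sigma
  apply one_div_le_one_div_of_le (one_add_exp_pos _)
  have : -(β * b) ≤ -(β * a) := by nlinarith
  exact add_le_add_right (Real.exp_le_exp.2 this) 1

lemma sigma_nonpos_le_half {β : ℝ} (hβ : 0 < β) {a : ℝ} (ha : a ≤ 0) : sigma β a ≤ 1/2 := by
  calc sigma β a ≤ sigma β 0 := sigma_mono hβ ha
  _ = 1/2 := sigma_zero β

lemma key {β : ℝ} (hβ : 0 < β) {t : ℝ} (ht : t ∈ Set.Icc (0:ℝ) 1) :
    sigma β t - 1/2 ≥ (t/2) * ((1 - Real.exp (-β)) / (1 + Real.exp (-β))) := by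
  have h := (concave_sigma hβ).2 (Set.left_mem_Icc.2 zero_le_one)
    (Set.right_mem_Icc.2 zero_le_one)
    (show (0:ℝ) ≤ 1 - t by linarith [ht.2]) ht.1 (by ring)
  simp only [smul_eq_mul, mul_zero, mul_one, zero_add] at h
  rw [sigma_zero, sigma_one] at h
  have hpos : (0:ℝ) < 1 + Real.exp (-β) := one_add_exp_pos _
  have : (1-t) * (1/2) + t * (1 / (1 + Real.exp (-β)))
      = 1/2 + (t/2) * ((1 - Real.exp (-β)) / (1 + Real.exp (-β))) := by
    field_simp
    ring
  linarith [this ▸ h]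

lemma pointwise {β : ℝ} (hβ : 0 < β) {x z : ℝ} (hx : x ∈ Set.Icc (0:ℝ) 1)
    (hz : z ∈ Set.Icc (0:ℝ) 1) :
    sigma β (x - z) - sigma β (-z)
      ≥ ((x - z)/2) * ((1 - Real.exp (-β)) / (1 + Real.exp (-β))) := by
  have hc : 0 ≤ (1 - Real.exp (-β)) / (1 + Real.exp (-β)) := by
    apply div_nonneg _ (one_add_exp_pos _).le
    have : Real.exp (-β) ≤ 1 := by rw [Real.exp_le_one_iff]; linarith
    linarith
  rcases le_or_gt z x with h | h
  · have ht : x - z ∈ Set.Icc (0:ℝ) 1 := ⟨by linarith, by linarith [hx.2, hz.1]⟩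
    have h1 := key hβ ht
    have h2 : sigma β (-z) ≤ 1/2 := sigma_nonpos_le_half hβ (by linarith [hz.1])
    linarith
  · have h1 : sigma β (-z) ≤ sigma β (x - z) := sigma_mono hβ (by linarith [hx.1])
    have h2 : ((x - z)/2) * ((1 - Real.exp (-β)) / (1 + Real.exp (-β))) ≤ 0 :=
      mul_nonpos_of_nonpos_of_nonneg (by linarith) hc
    linarith

end LinAux

theorem linearization_lemma {ι : Type*} (β : ℝ) (hβ : 0 < β)
    (V : Finset ι) (x z : ι → ℝ)
    (hx : ∀ i ∈ V, x i ∈ Set.Icc (0:ℝ) 1)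
    (hz : ∀ i ∈ V, z i ∈ Set.Icc (0:ℝ) 1) :
    ∑ i ∈ V, (sigma β (x i - z i) - sigma β (-(z i)))
      ≥ ((∑ i ∈ V, x i - ∑ i ∈ V, z i) / 2) *
        ((1 - Real.exp (-β)) / (1 + Real.exp (-β))) := by
  have h := Finset.sum_le_sum (fun i hi =>
    (LinAux.pointwise hβ (hx i hi) (hz i hi) : _))
  calc ((∑ i ∈ V, x i - ∑ i ∈ V, z i) / 2) * ((1 - Real.exp (-β)) / (1 + Real.exp (-β)))
      = ∑ i ∈ V, ((x i - z i)/2) * ((1 - Real.exp (-β)) / (1 + Real.exp (-β))) := by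
        rw [← Finset.sum_sub_distrib, Finset.sum_div, Finset.sum_mul]
    _ ≤ ∑ i ∈ V, (sigma β (x i - z i) - sigma β (-(z i))) := h
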